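/- If N is an even number with N ≥ k, then the space X_N = (c_0, ‖·‖_N) is not locally almost square: there exists f with ‖f‖_N = 1 (namely f = ∑_{j∈E} 2e_j for a suitable set E with |E| = N/2 meeting each block E_n, 2 ≤ n ≤ N/2+1, in exactly one point) such that for every 0 < ε < 1/(3N) there is no h with ‖h‖_N = 1 satisfying max{‖f + h‖_N, ‖f − h‖_N} ≤ 1 + ε. -/

import Mathlib

open Finset Filter

/-- The block `E_n = {2^n, …, 2^{n+1} - 1}`. -/
def blockE (n : ℕ) : Finset ℕ := Finset.Ico (2 ^ n) (2 ^ (n + 1))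

/-- The value set `{|f(x)| : x ∈ D_N}` where `D_N = C ∪ B ∪ A_N`:
`A_N` are the averaging functionals `(1/N)∑_{j∈A} e_j*` over sets of size `kN`,
`B = {(1/k) e_j*}`, and `C = ⋃_{n≥1} C_n` with
`C_n = {(1/2)e_l* ± (1/2)e_m* : l ≠ m ∈ E_n}`. -/
def valueSetN (k N : ℕ) (f : ℕ → ℝ) : Set ℝ :=
  {r | ∃ A : Finset ℕ, A.card = k * N ∧ r = |∑ j ∈ A, f j| / N} ∪
  {r | ∃ j : ℕ, r = |f j| / k} ∪
  {r | ∃ n l m : ℕ, 1 ≤ n ∧ l ∈ blockE n ∧ m ∈ blockE n ∧ l ≠ m ∧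
        (r = |f l / 2 + f m / 2| ∨ r = |f l / 2 - f m / 2|)}

/-- The norm `‖f‖_N = sup_{x ∈ D_N} |f(x)|` on `ℓ_∞`. -/
noncomputable def normN (k N : ℕ) (f : ℕ → ℝ) : ℝ :=
  sSup (valueSetN k N f)

lemma memA_vs {k N : ℕ} (g : ℕ → ℝ) {A : Finset ℕ} (h : A.card = k*N) :
    |∑ j ∈ A, g j| / N ∈ valueSetN k N g := Or.inl (Or.inl ⟨A, h, rfl⟩)

lemma memB_vs {k N : ℕ} (g : ℕ → ℝ) (j : ℕ) : |g j| / k ∈ valueSetN k N g :=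
  Or.inl (Or.inr ⟨j, rfl⟩)

lemma memC_vs {k N : ℕ} (g : ℕ → ℝ) {n l m : ℕ} (hn : 1 ≤ n) (hl : l ∈ blockE n)
    (hm : m ∈ blockE n) (hlm : l ≠ m) :
    |g l / 2 + g m / 2| ∈ valueSetN k N g ∧ |g l / 2 - g m / 2| ∈ valueSetN k N g :=
  ⟨Or.inr ⟨n, l, m, hn, hl, hm, hlm, Or.inl rfl⟩,
   Or.inr ⟨n, l, m, hn, hl, hm, hlm, Or.inr rfl⟩⟩

lemma vs_nonempty (k N : ℕ) (g : ℕ → ℝ) : (valueSetN k N g).Nonempty :=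
  ⟨|g 0| / k, memB_vs g 0⟩

lemma vs_le (k N : ℕ) (hk : 1 ≤ k) (hN : 1 ≤ N) (g : ℕ → ℝ) (M : ℝ)
    (hM : ∀ j, |g j| ≤ M) : ∀ r ∈ valueSetN k N g, r ≤ k * M := by
  intro r hr
  have hM0 : 0 ≤ M := le_trans (abs_nonneg _) (hM 0)
  have hk1 : (1:ℝ) ≤ k := by exact_mod_cast hk
  have hN1 : (1:ℝ) ≤ N := by exact_mod_cast hN
  rcases hr with (⟨A, hA, rfl⟩ | ⟨j, rfl⟩) | ⟨n, l, m, hn, hl, hm, hlm, hr⟩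
  · have h1 : |∑ j ∈ A, g j| ≤ (k*N) * M := by
      calc |∑ j ∈ A, g j| ≤ ∑ j ∈ A, |g j| := Finset.abs_sum_le_sum_abs _ _
        _ ≤ ∑ _j ∈ A, M := Finset.sum_le_sum fun j _ => hM j
        _ = (k*N) * M := by rw [Finset.sum_const, nsmul_eq_mul, hA]; push_cast; ring
    rw [div_le_iff₀ (by linarith)]
    push_cast at h1 ⊢
    nlinarith [abs_nonneg (∑ j ∈ A, g j)]
  · rw [div_le_iff₀ (by linarith)]
    have h11 : (1:ℝ)*1 ≤ k*k := mul_le_mul hk1 hk1 zero_le_one (by linarith)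
    nlinarith [hM j, abs_nonneg (g j)]
  · have h1 : M ≤ k * M := by nlinarith
    rcases hr with rfl | rfl
    · calc |g l / 2 + g m / 2| ≤ |g l / 2| + |g m / 2| := abs_add_le _ _
        _ ≤ M := by rw [abs_div, abs_div]; have := hM l; have := hM m; simp only [abs_two]; linarith
        _ ≤ k * M := h1
    · calc |g l / 2 - g m / 2| ≤ |g l / 2| + |g m / 2| := abs_sub _ _
        _ ≤ M := by rw [abs_div, abs_div]; have := hM l; have := hM m; simp only [abs_two]; linarith
        _ ≤ k * M := h1

lemma vs_bddAbove (k N : ℕ) (hk : 1 ≤ k) (hN : 1 ≤ N) (g : ℕ → ℝ) (M : ℝ)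
    (hM : ∀ j, |g j| ≤ M) : BddAbove (valueSetN k N g) :=
  ⟨k * M, fun _ hr => vs_le k N hk hN g M hM _ hr⟩

lemma bdd_of_tendsto (g : ℕ → ℝ) (hg : Tendsto g atTop (nhds 0)) : ∃ M, ∀ j, |g j| ≤ M := by
  obtain ⟨n0, hn0⟩ := Metric.tendsto_atTop.mp hg 1 one_pos
  refine ⟨1 + ∑ j ∈ Finset.range n0, |g j|, fun j => ?_⟩
  have hnn : (0:ℝ) ≤ ∑ j ∈ Finset.range n0, |g j| := Finset.sum_nonneg fun _ _ => abs_nonneg _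
  rcases le_or_gt n0 j with hj | hj
  · have := hn0 j hj
    rw [Real.dist_eq, sub_zero] at this
    linarith
  · have : |g j| ≤ ∑ j ∈ Finset.range n0, |g j| :=
      Finset.single_le_sum (f := fun i => |g i|) (fun _ _ => abs_nonneg _) (Finset.mem_range.mpr hj)
    linarith

lemma tail_small (g : ℕ → ℝ) (hg : Tendsto g atTop (nhds 0)) {γ : ℝ} (hγ : 0 < γ) :
    ∃ n0, ∀ j ≥ n0, |g j| ≤ γ := by
  obtain ⟨n0, hn0⟩ := Metric.tendsto_atTop.mp hg γ hγ
  exact ⟨n0, fun j hj => by have := hn0 j hj; rw [Real.dist_eq, sub_zero] at this; linarith⟩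

lemma pow_mem_blockE {n l : ℕ} : 2^l ∈ blockE n ↔ l = n := by
  simp only [blockE, Finset.mem_Ico]
  constructor
  · rintro ⟨h1, h2⟩
    have := (Nat.pow_le_pow_iff_right (le_refl 2)).mp h1
    have := (Nat.pow_lt_pow_iff_right (le_refl 2)).mp h2
    omega
  · rintro rfl
    exact ⟨le_refl _, Nat.pow_lt_pow_right (by norm_num) (Nat.lt_succ_self _)⟩

set_option maxHeartbeats 1000000

/-- For even `N ≥ k`, `X_N = (c_0, ‖·‖_N)` is not locally almost square:
the norm-one vector `f = ∑_{j∈E} 2 e_j`, for a suitable set `E` of size `N/2`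
meeting each block `E_n`, `2 ≤ n ≤ N/2 + 1`, in exactly one point, admits no
`h ∈ c_0` with `‖h‖_N = 1` and `max (‖f + h‖_N) (‖f - h‖_N) ≤ 1 + ε`
whenever `0 < ε < 1/(3N)`. -/
theorem XN_not_LASQ (k N : ℕ) (hk : 2 ≤ k) (hkN : k ≤ N) (hNe : Even N) :
    ∃ E : Finset ℕ, E.card = N / 2 ∧
      (∀ n : ℕ, 2 ≤ n → n ≤ N / 2 + 1 → (E ∩ blockE n).card = 1) ∧
      (∀ j ∈ E, ∃ n : ℕ, 2 ≤ n ∧ n ≤ N / 2 + 1 ∧ j ∈ blockE n) ∧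
      ∀ f : ℕ → ℝ, (f = fun j => if j ∈ E then (2 : ℝ) else 0) →
        Tendsto f atTop (nhds 0) ∧ normN k N f = 1 ∧
        ∀ ε : ℝ, 0 < ε → ε < 1 / (3 * N) →
          ¬∃ h : ℕ → ℝ, Tendsto h atTop (nhds 0) ∧ normN k N h = 1 ∧
            max (normN k N (f + h)) (normN k N (f - h)) ≤ 1 + ε := by
  have hN2 : 2 ≤ N := hk.trans hkN
  have hN0 : (0:ℝ) < N := by exact_mod_cast Nat.lt_of_lt_of_le Nat.zero_lt_two hN2
  set Q := N / 2 with hQdef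
  have hQ2 : 2 * Q = N := (Nat.two_mul_div_two_of_even hNe)
  have hQ1 : 1 ≤ Q := by omega
  have hkNQ : Q ≤ k * N := by nlinarith
  set E : Finset ℕ := (Finset.Icc 2 (Q+1)).image (2 ^ ·) with hEdef
  have hmemE : ∀ {j : ℕ}, j ∈ E ↔ ∃ n, 2 ≤ n ∧ n ≤ Q + 1 ∧ j = 2^n := by
    intro j
    simp only [hEdef, Finset.mem_image, Finset.mem_Icc]
    constructor
    · rintro ⟨n, ⟨h1,h2⟩, rfl⟩; exact ⟨n, h1, h2, rfl⟩
    · rintro ⟨n, h1, h2, rfl⟩; exact ⟨n, ⟨h1,h2⟩, rfl⟩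
  have hcardE : E.card = Q := by
    rw [hEdef, Finset.card_image_of_injective _ (Nat.pow_right_injective (le_refl 2)),
      Nat.card_Icc]
    omega
  have hEblock : ∀ n, 2 ≤ n → n ≤ Q + 1 → E ∩ blockE n = {2^n} := by
    intro n h2n hnQ
    ext j
    simp only [Finset.mem_inter, Finset.mem_singleton]
    constructor
    · rintro ⟨hjE, hjb⟩
      obtain ⟨l, _, _, rfl⟩ := hmemE.mp hjE
      rw [pow_mem_blockE.mp hjb]
    · rintro rfl
      exact ⟨hmemE.mpr ⟨n, h2n, hnQ, rfl⟩, pow_mem_blockE.mpr rfl⟩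
  have hElt : ∀ j ∈ E, j < 2^(Q+2) := by
    intro j hj
    obtain ⟨n, _, hn2, rfl⟩ := hmemE.mp hj
    exact Nat.pow_lt_pow_right (by norm_num) (by omega)
  refine ⟨E, hcardE, fun n h1 h2 => by rw [hEblock n h1 h2, Finset.card_singleton],
    fun j hj => ?_, ?_⟩
  · obtain ⟨n, h1, h2, rfl⟩ := hmemE.mp hj
    exact ⟨n, h1, h2, pow_mem_blockE.mpr rfl⟩
  intro f hf
  have hfj : ∀ j, f j = if j ∈ E then (2:ℝ) else 0 := fun j => by rw [hf]
  have hf0 : ∀ j ∉ E, f j = 0 := fun j hj => by rw [hfj j, if_neg hj]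
  have hf2 : ∀ j ∈ E, f j = 2 := fun j hj => by rw [hfj j, if_pos hj]
  have hsumf : ∀ A : Finset ℕ, ∑ j ∈ A, f j = 2 * ((A ∩ E).card : ℝ) := by
    intro A
    rw [hf]
    rw [Finset.sum_ite_mem]
    rw [Finset.sum_const, nsmul_eq_mul]
    ring
  -- at most one of f l, f m is nonzero for l ≠ m in a block
  have hfC : ∀ n l m : ℕ, l ∈ blockE n → m ∈ blockE n → l ≠ m → f l = 0 ∨ f m = 0 := by
    intro n l m hl hm hlm
    by_contra hc
    push_neg at hc
    have hlE : l ∈ E := by by_contra h; exact hc.1 (hf0 l h)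
    have hmE : m ∈ E := by by_contra h; exact hc.2 (hf0 m h)
    obtain ⟨a, _, _, rfl⟩ := hmemE.mp hlE
    obtain ⟨b, _, _, rfl⟩ := hmemE.mp hmE
    rw [pow_mem_blockE.mp hl, pow_mem_blockE.mp hm] at hlm
    exact hlm rfl
  have hfbound : ∀ j, |f j| ≤ 2 := by
    intro j
    rw [hfj j]
    split <;> simp
  -- the witness set A₀ for norm 1
  have hA0 : ∃ A : Finset ℕ, A.card = k * N ∧ A ∩ E = E := by
    refine ⟨E ∪ Finset.Ico (2^(Q+2)) (2^(Q+2) + (k*N - Q)), ?_, ?_⟩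
    · rw [Finset.card_union_of_disjoint, hcardE, Nat.card_Ico]
      · omega
      · rw [Finset.disjoint_left]
        intro j hj hj2
        have := hElt j hj
        have := (Finset.mem_Ico.mp hj2).1
        omega
    · rw [Finset.union_inter_distrib_right, Finset.inter_self]
      have : Finset.Ico (2^(Q+2)) (2^(Q+2) + (k*N - Q)) ∩ E = ∅ := by
        rw [Finset.eq_empty_iff_forall_notMem]
        intro j hj
        rw [Finset.mem_inter, Finset.mem_Ico] at hj
        have := hElt j hj.2
        omega
      rw [this, Finset.union_empty]
  -- norm of f is 1
  have hfle : ∀ r ∈ valueSetN k N f, r ≤ 1 := by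
    intro r hr
    rcases hr with (⟨A, hA, rfl⟩ | ⟨j, rfl⟩) | ⟨n, l, m, hn, hl, hm, hlm, hr⟩
    · rw [hsumf A, div_le_one hN0]
      have h1 : (A ∩ E).card ≤ Q := hcardE ▸ Finset.card_le_card (Finset.inter_subset_right)
      have h2 : ((A ∩ E).card : ℝ) ≤ Q := by exact_mod_cast h1
      have h3 : (2:ℝ) * Q = N := by exact_mod_cast hQ2
      rw [abs_of_nonneg (by positivity)]
      linarith
    · have hk0 : (2:ℝ) ≤ k := by exact_mod_cast hk
      rw [div_le_one (by linarith)]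
      linarith [hfbound j]
    · have hb : |f l / 2 + f m / 2| ≤ 1 ∧ |f l / 2 - f m / 2| ≤ 1 := by
        rcases hfC n l m hl hm hlm with h0 | h0 <;> rw [h0] <;>
          constructor <;>
          · rw [show (0:ℝ)/2 = 0 by norm_num]
            first
              | (rw [add_zero] ; rw [abs_div, abs_two] ; linarith [hfbound l])
              | (rw [zero_add] ; rw [abs_div, abs_two] ; linarith [hfbound m])
              | (rw [sub_zero] ; rw [abs_div, abs_two] ; linarith [hfbound l])
              | (rw [zero_sub, abs_neg] ; rw [abs_div, abs_two] ; linarith [hfbound m])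
      rcases hr with rfl | rfl
      · exact hb.1
      · exact hb.2
  have hnormf : normN k N f = 1 := by
    obtain ⟨A, hAcard, hAE⟩ := hA0
    have hmem : (1:ℝ) ∈ valueSetN k N f := by
      have := memA_vs (k := k) (N := N) f hAcard
      have hsum : |∑ j ∈ A, f j| / N = 1 := by
        rw [hsumf A, hAE, hcardE]
        rw [abs_of_nonneg (by positivity)]
        have h3 : (2:ℝ) * Q = N := by exact_mod_cast hQ2
        rw [h3, div_self (ne_of_gt hN0)]
      rwa [hsum] at this
    refine le_antisymm (csSup_le (vs_nonempty k N f) hfle) (le_csSup ?_ hmem)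
    exact vs_bddAbove k N (by omega) (by omega) f 2 hfbound
  have hftend : Tendsto f atTop (nhds 0) := by
    refine Tendsto.congr' ?_ (tendsto_const_nhds (x := (0:ℝ)) (f := atTop (α := ℕ)))
    filter_upwards [eventually_ge_atTop (2^(Q+2))] with j hj
    exact (hf0 j (fun hjE => by have := hElt j hjE; omega)).symm
  refine ⟨hftend, hnormf, ?_⟩
  intro ε hε hε'
  rintro ⟨h, hhtend, hhnorm, hmax⟩
  -- setup: bounds on h and on f±h value sets
  have hk0 : (0:ℝ) < k := by exact_mod_cast (by omega : 0 < k)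
  have hk2 : (2:ℝ) ≤ k := by exact_mod_cast hk
  have hN2' : (2:ℝ) ≤ N := by exact_mod_cast hN2
  obtain ⟨Mh, hMh⟩ := bdd_of_tendsto h hhtend
  have hbddp : BddAbove (valueSetN k N (f + h)) := by
    refine vs_bddAbove k N (by omega) (by omega) _ (2 + Mh) (fun j => ?_)
    have h1 := hfbound j; have h2 := hMh j
    calc |(f + h) j| = |f j + h j| := rfl
      _ ≤ |f j| + |h j| := abs_add_le _ _
      _ ≤ 2 + Mh := by linarith
  have hbddm : BddAbove (valueSetN k N (f - h)) := by
    refine vs_bddAbove k N (by omega) (by omega) _ (2 + Mh) (fun j => ?_)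
    have h1 := hfbound j; have h2 := hMh j
    calc |(f - h) j| = |f j - h j| := rfl
      _ ≤ |f j| + |h j| := abs_sub _ _
      _ ≤ 2 + Mh := by linarith
  have hvp : ∀ r ∈ valueSetN k N (f + h), r ≤ 1 + ε := fun r hr =>
    (le_csSup hbddp hr).trans ((le_max_left _ _).trans hmax)
  have hvm : ∀ r ∈ valueSetN k N (f - h), r ≤ 1 + ε := fun r hr =>
    (le_csSup hbddm hr).trans ((le_max_right _ _).trans hmax)
  -- Step 1: h is small on E
  have hE2ε : ∀ j ∈ E, |h j| ≤ 2 * ε := by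
    intro j hj
    obtain ⟨n, hn2, hnQ, rfl⟩ := hmemE.mp hj
    have h4 : 4 ≤ 2^n := by
      calc (4:ℕ) = 2^2 := rfl
        _ ≤ 2^n := Nat.pow_le_pow_right (by norm_num) hn2
    have hlb : (2:ℕ)^n ∈ blockE n := pow_mem_blockE.mpr rfl
    have hmb : 2^n + 1 ∈ blockE n := by
      simp only [blockE, Finset.mem_Ico, pow_succ]
      omega
    have hne : (2:ℕ)^n ≠ 2^n + 1 := by omega
    have hfm : f (2^n + 1) = 0 := by
      apply hf0
      intro hmE
      obtain ⟨b, hb2, hbQ, hbm⟩ := hmemE.mp hmE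
      have hb : (2:ℕ)^b ∈ blockE n := hbm ▸ hmb
      have hbn := pow_mem_blockE.mp hb
      rw [hbn] at hbm
      omega
    have e1 := hvp _ (memC_vs (f + h) (by omega) hlb hmb hne).1
    have e2 := hvp _ (memC_vs (f + h) (by omega) hlb hmb hne).2
    have e3 := hvm _ (memC_vs (f - h) (by omega) hlb hmb hne).1
    have e4 := hvm _ (memC_vs (f - h) (by omega) hlb hmb hne).2
    simp only [Pi.add_apply, Pi.sub_apply, hf2 (2^n) hj, hfm] at e1 e2 e3 e4
    rw [abs_le] at e1 e2 e3 e4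
    rw [abs_le]
    constructor
    · linarith [e3.2, e4.2]
    · linarith [e1.2, e2.2]
  -- sums of |h| over subsets of E
  have hsumE : ∀ S : Finset ℕ, S ⊆ E → |∑ j ∈ S, h j| ≤ ε * N := by
    intro S hS
    have hc1 : (S.card : ℝ) ≤ (Q : ℝ) := by
      exact_mod_cast hcardE ▸ Finset.card_le_card hS
    have hQN : (2:ℝ) * Q = N := by exact_mod_cast hQ2
    calc |∑ j ∈ S, h j| ≤ ∑ j ∈ S, |h j| := Finset.abs_sum_le_sum_abs _ _
      _ ≤ ∑ _j ∈ S, (2*ε) := Finset.sum_le_sum fun j hj => hE2ε j (hS hj)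
      _ = S.card * (2*ε) := by rw [Finset.sum_const, nsmul_eq_mul]
      _ ≤ Q * (2*ε) := by nlinarith [hε.le]
      _ = ε * N := by nlinarith
  -- Step 2: key estimate for sums over sets disjoint from E
  have hk2N : 2 * N ≤ k * N := Nat.mul_le_mul_right N hk
  set γ : ℝ := ε / ((k:ℝ) * N) with hγdef
  have hγ0 : 0 < γ := div_pos hε (mul_pos hk0 hN0)
  obtain ⟨n0, hn0⟩ := tail_small h hhtend hγ0
  have key : ∀ S : Finset ℕ, Disjoint S E → S.card ≤ k*N - Q →
      |∑ j ∈ S, h j| ≤ 2*ε*N + ε := by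
    intro S hdisj hScard
    set a := max n0 ((S ∪ E).sup id + 1) with hadef
    set P := Finset.Ico a (a + (k*N - Q - S.card)) with hPdef
    have hPSE : ∀ j ∈ P, j ∉ S ∪ E ∧ n0 ≤ j := by
      intro j hj
      rw [hPdef, Finset.mem_Ico] at hj
      constructor
      · intro hjSE
        have hle : id j ≤ (S ∪ E).sup id := Finset.le_sup (f := id) hjSE
        simp only [id_eq] at hle
        omega
      · omega
    have hPdisj : Disjoint P (S ∪ E) := by
      rw [Finset.disjoint_left]
      exact fun {j} hjP hjSE => (hPSE j hjP).1 hjSE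
    set A := (S ∪ E) ∪ P with hAdef
    have hdisjSE : Disjoint S E := hdisj
    have hSEcard : (S ∪ E).card = S.card + Q := by
      rw [Finset.card_union_of_disjoint hdisj, hcardE]
    have hAcard : A.card = k * N := by
      rw [hAdef, Finset.card_union_of_disjoint hPdisj.symm, hSEcard, hPdef, Nat.card_Ico]
      omega
    have hEsubA : E ⊆ A := fun j hj => Finset.mem_union_left _ (Finset.mem_union_right _ hj)
    have hAE : A ∩ E = E := Finset.inter_eq_right.mpr hEsubA
    have hQN : (2:ℝ) * Q = N := by exact_mod_cast hQ2
    have hsumfA : ∑ j ∈ A, f j = (N:ℝ) := by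
      rw [hsumf A, hAE, hcardE]
      linarith
    have hsplit : ∑ j ∈ A, h j = ∑ j ∈ S, h j + ∑ j ∈ E, h j + ∑ j ∈ P, h j := by
      rw [hAdef, Finset.sum_union hPdisj.symm, Finset.sum_union hdisj]
    have hPbound : |∑ j ∈ P, h j| ≤ ε := by
      have h1 : P.card ≤ k*N := by rw [hPdef, Nat.card_Ico]; omega
      have h2 : (P.card:ℝ) ≤ ((k:ℝ)*N) := by exact_mod_cast h1
      calc |∑ j ∈ P, h j| ≤ ∑ j ∈ P, |h j| := Finset.abs_sum_le_sum_abs _ _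
        _ ≤ ∑ _j ∈ P, γ := Finset.sum_le_sum fun j hj => hn0 j (hPSE j hj).2
        _ = P.card * γ := by rw [Finset.sum_const, nsmul_eq_mul]
        _ ≤ ((k:ℝ)*N) * γ := by nlinarith [hγ0.le]
        _ = ε := by rw [hγdef]; field_simp
    have hEbound : |∑ j ∈ E, h j| ≤ ε * N := hsumE E (le_refl E)
    have h1 := abs_le.mp hEbound
    have h2 := abs_le.mp hPbound
    rcases le_or_gt 0 (∑ j ∈ S, h j) with hs | hs
    · have hv := hvp _ (memA_vs (f + h) hAcard)
      have hsum : ∑ j ∈ A, (f + h) j = N + ∑ j ∈ A, h j := by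
        simp only [Pi.add_apply]
        rw [Finset.sum_add_distrib, hsumfA]
      rw [div_le_iff₀ hN0] at hv
      rw [hsum, hsplit] at hv
      have habs := le_abs_self ((N:ℝ) + (∑ j ∈ S, h j + ∑ j ∈ E, h j + ∑ j ∈ P, h j))
      have hv2 := le_trans habs hv
      have hring : (1+ε)*(N:ℝ) = N + ε*N := by ring
      rw [abs_of_nonneg hs]
      linarith
    · have hv := hvm _ (memA_vs (f - h) hAcard)
      have hsum : ∑ j ∈ A, (f - h) j = N - ∑ j ∈ A, h j := by
        simp only [Pi.sub_apply]
        rw [Finset.sum_sub_distrib, hsumfA]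
      rw [div_le_iff₀ hN0] at hv
      rw [hsum, hsplit] at hv
      have habs := le_abs_self ((N:ℝ) - (∑ j ∈ S, h j + ∑ j ∈ E, h j + ∑ j ∈ P, h j))
      have hv2 := le_trans habs hv
      have hring : (1+ε)*(N:ℝ) = N + ε*N := by ring
      rw [abs_of_neg hs]
      linarith
  -- pointwise bound on h
  have hhj : ∀ j, |h j| ≤ 2*ε*N + ε := by
    intro j
    by_cases hj : j ∈ E
    · have := hE2ε j hj
      nlinarith [hε.le]
    · have hd : Disjoint ({j} : Finset ℕ) E := Finset.disjoint_singleton_left.mpr hj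
      have hc : ({j} : Finset ℕ).card ≤ k*N - Q := by
        rw [Finset.card_singleton]
        omega
      have := key {j} hd hc
      simpa using this
  -- uniform bound on all values of h
  have hεN : ε * (3*N) < 1 := by
    have h3N : (0:ℝ) < 3*N := by linarith
    calc ε * (3*N) < (1/(3*N)) * (3*N) := by nlinarith
      _ = 1 := by field_simp
  have hub : ∀ r ∈ valueSetN k N h, r ≤ max (2*ε*N + ε) (6*ε) := by
    intro r hr
    have hB3 : (0:ℝ) ≤ 2*ε*N + ε := by nlinarith [hε.le]
    rcases hr with (⟨A, hA, rfl⟩ | ⟨j, rfl⟩) | ⟨n, l, m, hn, hl, hm, hlm, hr⟩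
    · refine le_trans ?_ (le_max_right _ _)
      have hTcard : (A \ E).card ≤ k*N := hA ▸ Finset.card_le_card Finset.sdiff_subset
      obtain ⟨t, htT, htcard⟩ :=
        Finset.exists_subset_card_eq (s := A \ E) (n := (A \ E).card / 2) (Nat.div_le_self _ _)
      have ht1 : t.card ≤ k*N - Q := by omega
      have ht2 : ((A \ E) \ t).card ≤ k*N - Q := by
        rw [Finset.card_sdiff_of_subset htT]
        omega
      have hd1 : Disjoint t E :=
        Finset.disjoint_of_subset_left htT Finset.sdiff_disjoint
      have hd2 : Disjoint ((A \ E) \ t) E :=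
        Finset.disjoint_of_subset_left Finset.sdiff_subset Finset.sdiff_disjoint
      have k1 := key t hd1 ht1
      have k2 := key ((A \ E) \ t) hd2 ht2
      have kE := hsumE (A ∩ E) Finset.inter_subset_right
      have hsum : ∑ j ∈ A, h j
          = ∑ j ∈ A ∩ E, h j + (∑ j ∈ (A \ E) \ t, h j + ∑ j ∈ t, h j) := by
        rw [Finset.sum_sdiff htT, Finset.sum_inter_add_sum_sdiff]
      rw [div_le_iff₀ hN0]
      have habs : |∑ j ∈ A, h j| ≤ ε*N + ((2*ε*N+ε) + (2*ε*N+ε)) := by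
        rw [hsum]
        calc |∑ j ∈ A ∩ E, h j + (∑ j ∈ (A \ E) \ t, h j + ∑ j ∈ t, h j)|
            ≤ |∑ j ∈ A ∩ E, h j| + |∑ j ∈ (A \ E) \ t, h j + ∑ j ∈ t, h j| := abs_add_le _ _
          _ ≤ |∑ j ∈ A ∩ E, h j| + (|∑ j ∈ (A \ E) \ t, h j| + |∑ j ∈ t, h j|) := by
              linarith [abs_add_le (∑ j ∈ (A \ E) \ t, h j) (∑ j ∈ t, h j)]
          _ ≤ ε*N + ((2*ε*N+ε) + (2*ε*N+ε)) := by linarith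
      nlinarith [habs, hε.le]
    · refine le_trans ?_ (le_max_left _ _)
      rw [div_le_iff₀ hk0]
      nlinarith [hhj j, hB3]
    · refine le_trans ?_ (le_max_left _ _)
      have hb : |h l / 2 + h m / 2| ≤ 2*ε*N + ε ∧ |h l / 2 - h m / 2| ≤ 2*ε*N + ε := by
        constructor
        · calc |h l / 2 + h m / 2| ≤ |h l / 2| + |h m / 2| := abs_add_le _ _
            _ ≤ 2*ε*N + ε := by
                rw [abs_div, abs_div, abs_two]
                linarith [hhj l, hhj m]
        · calc |h l / 2 - h m / 2| ≤ |h l / 2| + |h m / 2| := abs_sub _ _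
            _ ≤ 2*ε*N + ε := by
                rw [abs_div, abs_div, abs_two]
                linarith [hhj l, hhj m]
      rcases hr with rfl | rfl
      · exact hb.1
      · exact hb.2
  have h1le : (1:ℝ) ≤ max (2*ε*N + ε) (6*ε) := by
    rw [← hhnorm]
    exact csSup_le (vs_nonempty k N h) hub
  have hm1 : 2*ε*N + ε < 1 := by nlinarith [hε.le]
  have hm2 : 6*ε < 1 := by nlinarith [hε.le]
  have := max_lt hm1 hm2
  linarith
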